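/- For ρ ∈ (0,1) and probability measures W, Q, the Rényi divergence satisfies (1−ρ)D_ρ(W‖Q) = inf over probability measures V of [ρ D_1(V‖W) + (1−ρ) D_1(V‖Q)], where D_1 is the Kullback-Leibler divergence (with the convention that the expression is ∞ when otherwise undefined). -/

import Mathlib

open MeasureTheory Real
open scoped ENNReal Classical

/-- Integrand of the order-`ρ` Rényi divergence with respect to a dominating measure `ν`. -/
noncomputable def renyiIntegrand {Y : Type*} [MeasurableSpace Y] (ρ : ℝ) (W Q ν : Measure Y)
    (y : Y) : ℝ :=
  ((W.rnDeriv ν y).toReal) ^ ρ * ((Q.rnDeriv ν y).toReal) ^ (1 - ρ)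

/-- Order-`ρ` Rényi divergence `D_ρ(W‖Q)` computed via a dominating measure `ν`. -/
noncomputable def renyiDiv {Y : Type*} [MeasurableSpace Y] (ρ : ℝ) (W Q ν : Measure Y) : ℝ :=
  (ρ - 1)⁻¹ * Real.log (∫ y, renyiIntegrand ρ W Q ν y ∂ν)

/-- Kullback-Leibler divergence `D_1(μ‖ν) = ∫ log (dμ/dν) dμ` (real-valued version). -/
noncomputable def klDiv' {Y : Type*} [MeasurableSpace Y] (μ ν : Measure Y) : ℝ :=
  ∫ y, Real.log ((μ.rnDeriv ν y).toReal) ∂μ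

/-- Order-`ρ` tilted probability measure `W_ρ^Q`:
`dW_ρ^Q/dν = e^{(1-ρ) D_ρ(W‖Q)} (dW/dν)^ρ (dQ/dν)^{1-ρ}`. -/
noncomputable def tilted {Y : Type*} [MeasurableSpace Y] (ρ : ℝ) (W Q ν : Measure Y) :
    Measure Y :=
  ν.withDensity fun y =>
    ENNReal.ofReal (Real.exp ((1 - ρ) * renyiDiv ρ W Q ν) * renyiIntegrand ρ W Q ν y)

/-- Kullback-Leibler divergence, with value `∞` when undefined. -/
noncomputable def klDivE {Y : Type*} [MeasurableSpace Y] (μ ν : Measure Y) : ℝ≥0∞ :=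
  if μ ≪ ν ∧ Integrable (fun y => Real.log ((μ.rnDeriv ν y).toReal)) μ
  then ENNReal.ofReal (klDiv' μ ν) else ∞

/-- Order-`ρ` Rényi divergence with value `∞` when undefined (for `ρ ∈ (0,1)` this happens
exactly when `W ⊥ Q`). -/
noncomputable def renyiDivE {Y : Type*} [MeasurableSpace Y] (ρ : ℝ) (W Q ν : Measure Y) :
    ℝ≥0∞ :=
  if 0 < ∫ y, renyiIntegrand ρ W Q ν y ∂ν then ENNReal.ofReal (renyiDiv ρ W Q ν) else ∞

section helpers

lemma my_integral_pos {Y : Type*} [MeasurableSpace Y] (V : Measure Y) [IsProbabilityMeasure V]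
    {h : Y → ℝ} (hpos : ∀ᵐ y ∂V, 0 < h y) (hint : Integrable h V) :
    0 < ∫ y, h y ∂V := by
  rcases lt_or_eq_of_le (integral_nonneg_of_ae (hpos.mono fun y hy => hy.le)) with h' | h'
  · exact h'
  · exfalso
    have hz : h =ᵐ[V] 0 :=
      (integral_eq_zero_iff_of_nonneg_ae (hpos.mono fun y hy => hy.le) hint).mp h'.symm
    obtain ⟨y, hy1, hy2⟩ := (hpos.and hz).exists
    simp only [Pi.zero_apply] at hy2
    exact lt_irrefl _ (hy2 ▸ hy1)

lemma my_jensen_log {Y : Type*} [MeasurableSpace Y] (V : Measure Y) [IsProbabilityMeasure V]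
    {h : Y → ℝ} (hpos : ∀ᵐ y ∂V, 0 < h y) (hint : Integrable h V)
    (hlog : Integrable (fun y => Real.log (h y)) V) :
    ∫ y, Real.log (h y) ∂V ≤ Real.log (∫ y, h y ∂V) := by
  set c := ∫ y, h y ∂V with hc
  have hc0 : 0 < c := my_integral_pos V hpos hint
  have key : ∀ᵐ y ∂V, Real.log (h y) ≤ h y / c - 1 + Real.log c := by
    filter_upwards [hpos] with y hy
    have h1 : Real.log (h y / c) ≤ h y / c - 1 := Real.log_le_sub_one_of_pos (div_pos hy hc0)
    rw [Real.log_div hy.ne' hc0.ne'] at h1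
    linarith
  have h1 : Integrable (fun y => h y / c - 1) V := (hint.div_const c).sub (integrable_const 1)
  have hrint : Integrable (fun y => h y / c - 1 + Real.log c) V := h1.add (integrable_const _)
  calc ∫ y, Real.log (h y) ∂V ≤ ∫ y, (h y / c - 1 + Real.log c) ∂V :=
        integral_mono_ae hlog hrint key
    _ = Real.log c := by
        rw [integral_add h1 (integrable_const _),
          integral_sub (hint.div_const c) (integrable_const 1), integral_div, integral_const,
          integral_const]
        simp [← hc, div_self hc0.ne']

lemma ennreal_mul_inv_le_one (a : ℝ≥0∞) : a * a⁻¹ ≤ 1 := by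
  rcases eq_or_ne a 0 with rfl | h0
  · simp
  rcases eq_or_ne a ∞ with rfl | ht
  · simp
  · rw [ENNReal.mul_inv_cancel h0 ht]

lemma my_klDiv'_nonneg {Y : Type*} [MeasurableSpace Y] (V P : Measure Y)
    [IsProbabilityMeasure V] [IsProbabilityMeasure P] (hVP : V ≪ P)
    (hint : Integrable (fun y => Real.log ((V.rnDeriv P y).toReal)) V) :
    0 ≤ ∫ y, Real.log ((V.rnDeriv P y).toReal) ∂V := by
  have hupos : ∀ᵐ y ∂V, 0 < (V.rnDeriv P y).toReal := by
    filter_upwards [Measure.rnDeriv_pos hVP, hVP.ae_le (Measure.rnDeriv_lt_top V P)]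
      with y h1 h2
    exact ENNReal.toReal_pos h1.ne' h2.ne
  have hlintle : ∫⁻ y, (V.rnDeriv P y)⁻¹ ∂V ≤ 1 := by
    rw [← MeasureTheory.lintegral_rnDeriv_mul hVP (f := fun y => (V.rnDeriv P y)⁻¹)
      (Measure.measurable_rnDeriv V P).inv.aemeasurable]
    calc ∫⁻ y, V.rnDeriv P y * (V.rnDeriv P y)⁻¹ ∂P ≤ ∫⁻ _, 1 ∂P :=
          lintegral_mono fun y => ennreal_mul_inv_le_one _
      _ = 1 := by simp
  have hmeas : AEMeasurable (fun y => (V.rnDeriv P y)⁻¹) V :=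
    (Measure.measurable_rnDeriv V P).inv.aemeasurable
  have hinvint : Integrable (fun y => ((V.rnDeriv P y)⁻¹).toReal) V :=
    integrable_toReal_of_lintegral_ne_top hmeas (hlintle.trans_lt ENNReal.one_lt_top).ne
  have heq : (fun y => ((V.rnDeriv P y)⁻¹).toReal) = fun y => ((V.rnDeriv P y).toReal)⁻¹ := by
    funext y; exact ENNReal.toReal_inv _
  rw [heq] at hinvint
  have hile : ∫ y, ((V.rnDeriv P y).toReal)⁻¹ ∂V ≤ 1 := by
    rw [← heq, integral_toReal hmeas (by
      filter_upwards [Measure.rnDeriv_pos hVP] with y h1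
      exact ENNReal.inv_lt_top.mpr h1)]
    calc (∫⁻ y, (V.rnDeriv P y)⁻¹ ∂V).toReal ≤ (1 : ℝ≥0∞).toReal :=
          ENNReal.toReal_mono ENNReal.one_ne_top hlintle
      _ = 1 := by simp
  have hj := my_jensen_log V (h := fun y => ((V.rnDeriv P y).toReal)⁻¹)
    (hpos := hupos.mono fun y hy => inv_pos.mpr hy) hinvint
    (by
      have : (fun y => Real.log (((V.rnDeriv P y).toReal)⁻¹))
          = fun y => -Real.log ((V.rnDeriv P y).toReal) := by
        funext y; rw [Real.log_inv]
      rw [this]; exact hint.neg)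
  have h2 : ∫ y, Real.log (((V.rnDeriv P y).toReal)⁻¹) ∂V
      = -∫ y, Real.log ((V.rnDeriv P y).toReal) ∂V := by
    rw [← integral_neg]; congr 1; funext y; rw [Real.log_inv]
  have h3 : Real.log (∫ y, ((V.rnDeriv P y).toReal)⁻¹ ∂V) ≤ 0 :=
    Real.log_nonpos (integral_nonneg fun y => inv_nonneg.mpr ENNReal.toReal_nonneg) hile
  rw [h2] at hj
  linarith

lemma my_key1 (σ : ℝ) (hσ : 0 < σ) {x y : ℝ} (hx : 0 < x) (hy : 0 < y) :
    x ^ σ * y ^ (1 - σ) * (Real.log y - Real.log x) ≤ σ⁻¹ * y := by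
  have h1 : Real.log y - Real.log x = Real.log (y / x) := (Real.log_div hy.ne' hx.ne').symm
  have h2 : Real.log (y / x) ≤ (y / x) ^ σ / σ := Real.log_le_rpow_div (div_pos hy hx).le hσ
  have hfac : (0:ℝ) ≤ x ^ σ * y ^ (1 - σ) :=
    mul_nonneg (Real.rpow_nonneg hx.le σ) (Real.rpow_nonneg hy.le _)
  calc x ^ σ * y ^ (1 - σ) * (Real.log y - Real.log x)
      ≤ x ^ σ * y ^ (1 - σ) * ((y / x) ^ σ / σ) := by
        rw [h1]; exact mul_le_mul_of_nonneg_left h2 hfac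
    _ = σ⁻¹ * ((x * (y / x)) ^ σ * y ^ (1 - σ)) := by
        rw [Real.mul_rpow hx.le (div_pos hy hx).le]; ring
    _ = σ⁻¹ * y := by
        have hxy : x * (y / x) = y := by field_simp
        have hss : σ + (1 - σ) = 1 := by ring
        rw [hxy, ← Real.rpow_add hy, hss, Real.rpow_one]

lemma my_bound {ρ : ℝ} (hρ0 : 0 < ρ) (hρ1 : ρ < 1) {x y : ℝ} (hx : 0 ≤ x) (hy : 0 ≤ y) :
    x ^ ρ * y ^ (1 - ρ) * |Real.log y - Real.log x| ≤ ρ⁻¹ * y + (1 - ρ)⁻¹ * x := by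
  have h1ρ : (0:ℝ) < 1 - ρ := by linarith
  rcases eq_or_lt_of_le hx with rfl | hx0
  · rw [Real.zero_rpow hρ0.ne']
    simp only [zero_mul]
    positivity
  rcases eq_or_lt_of_le hy with rfl | hy0
  · rw [Real.zero_rpow h1ρ.ne', mul_zero]
    simp only [zero_mul]
    positivity
  have hnn1 : 0 ≤ ρ⁻¹ * y := by positivity
  have hnn2 : 0 ≤ (1-ρ)⁻¹ * x := by positivity
  rcases abs_cases (Real.log y - Real.log x) with ⟨habs, _⟩ | ⟨habs, _⟩
  · rw [habs]
    have h := my_key1 ρ hρ0 hx0 hy0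
    linarith
  · rw [habs]
    have h := my_key1 (1-ρ) h1ρ hy0 hx0
    have h2 : (1 : ℝ) - (1 - ρ) = ρ := by ring
    rw [h2] at h
    nlinarith [h]

end helpers

/-- Variational characterization: for `ρ ∈ (0,1)`,
`(1−ρ) D_ρ(W‖Q) = inf_V [ρ D_1(V‖W) + (1−ρ) D_1(V‖Q)]`, the infimum running over all
probability measures `V`, with the convention `∞` when otherwise undefined. -/
theorem renyi_variational {Y : Type*} [MeasurableSpace Y] (ρ : ℝ)
    (hρ : ρ ∈ Set.Ioo (0 : ℝ) 1) (W Q ν : Measure Y)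
    [IsProbabilityMeasure W] [IsProbabilityMeasure Q] [SigmaFinite ν]
    (hW : W ≪ ν) (hQ : Q ≪ ν) :
    ENNReal.ofReal (1 - ρ) * renyiDivE ρ W Q ν =
      ⨅ (V : Measure Y) (_ : IsProbabilityMeasure V),
        ENNReal.ofReal ρ * klDivE V W + ENNReal.ofReal (1 - ρ) * klDivE V Q := by
  obtain ⟨hρ0, hρ1⟩ := hρ
  have h1ρ : (0:ℝ) < 1 - ρ := by linarith
  have hone : ENNReal.ofReal (1 - ρ) ≠ 0 := by
    simp only [ne_eq, ENNReal.ofReal_eq_zero, not_le]; linarith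
  have hrhone : ENNReal.ofReal ρ ≠ 0 := by
    simp only [ne_eq, ENNReal.ofReal_eq_zero, not_le]; linarith
  simp only [renyiDivE]
  set f : Y → ℝ := fun y => (W.rnDeriv ν y).toReal with hfdef
  set g : Y → ℝ := fun y => (Q.rnDeriv ν y).toReal with hgdef
  set r : Y → ℝ := fun y => f y ^ ρ * g y ^ (1 - ρ) with hrdef
  have hrr : renyiIntegrand ρ W Q ν = r := rfl
  rw [hrr]
  have hfmeas : Measurable f := (Measure.measurable_rnDeriv W ν).ennreal_toReal
  have hgmeas : Measurable g := (Measure.measurable_rnDeriv Q ν).ennreal_toReal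
  have hrmeas : Measurable r :=
    ((Real.continuous_rpow_const hρ0.le).measurable.comp hfmeas).mul
      ((Real.continuous_rpow_const h1ρ.le).measurable.comp hgmeas)
  have hrnn : ∀ y, 0 ≤ r y := fun y =>
    mul_nonneg (Real.rpow_nonneg ENNReal.toReal_nonneg _)
      (Real.rpow_nonneg ENNReal.toReal_nonneg _)
  have hfint : Integrable f ν := Measure.integrable_toReal_rnDeriv
  have hgint : Integrable g ν := Measure.integrable_toReal_rnDeriv
  have hrle : ∀ y, r y ≤ ρ * f y + (1 - ρ) * g y := fun y =>
    Real.geom_mean_le_arith_mean2_weighted hρ0.le h1ρ.le ENNReal.toReal_nonneg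
      ENNReal.toReal_nonneg (by ring)
  have hmaj : Integrable (fun y => ρ * f y + (1 - ρ) * g y) ν :=
    (hfint.const_mul ρ).add (hgint.const_mul (1 - ρ))
  have hrint : Integrable r ν := by
    refine hmaj.mono' hrmeas.aestronglyMeasurable (ae_of_all _ fun y => ?_)
    rw [Real.norm_eq_abs, abs_of_nonneg (hrnn y)]
    exact hrle y
  set Z : ℝ := ∫ y, r y ∂ν with hZdef
  have hZnn : 0 ≤ Z := integral_nonneg hrnn
  by_cases hZ : 0 < Z
  ·   rw [if_pos hZ]
      have hrd : renyiDiv ρ W Q ν = (ρ - 1)⁻¹ * Real.log Z := by rw [hZdef]; rfl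
      have hLHS : ENNReal.ofReal (1 - ρ) * ENNReal.ofReal (renyiDiv ρ W Q ν)
          = ENNReal.ofReal (-Real.log Z) := by
        rw [← ENNReal.ofReal_mul h1ρ.le, hrd]
        congr 1
        have hne : ρ - 1 ≠ 0 := by linarith
        field_simp
        ring
      rw [hLHS]
      apply le_antisymm
      · -- lower bound
        refine le_iInf fun V => le_iInf fun hV => ?_
        haveI := hV
        by_cases cW : V ≪ W ∧ Integrable (fun y => Real.log ((V.rnDeriv W y).toReal)) V
        swap
        · unfold klDivE
          rw [if_neg cW, ENNReal.mul_top hrhone, top_add]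
          exact le_top
        by_cases cQ : V ≪ Q ∧ Integrable (fun y => Real.log ((V.rnDeriv Q y).toReal)) V
        swap
        · unfold klDivE
          rw [if_neg cQ, ENNReal.mul_top hone, add_top]
          exact le_top
        obtain ⟨hVW, hiW⟩ := cW
        obtain ⟨hVQ, hiQ⟩ := cQ
        unfold klDivE
        rw [if_pos ⟨hVW, hiW⟩, if_pos ⟨hVQ, hiQ⟩]
        have hVν : V ≪ ν := hVW.trans hW
        set h : Y → ℝ := fun y => r y / (V.rnDeriv ν y).toReal with hhdef
        have hhmeas : Measurable h := hrmeas.div (Measure.measurable_rnDeriv V ν).ennreal_toReal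
        have hhnn : ∀ y, 0 ≤ h y := fun y => div_nonneg (hrnn y) ENNReal.toReal_nonneg
        have aeA : ∀ᵐ y ∂V, Real.log (h y)
            = -(ρ * Real.log ((V.rnDeriv W y).toReal)
              + (1 - ρ) * Real.log ((V.rnDeriv Q y).toReal)) := by
          filter_upwards [hVν.ae_le (Measure.rnDeriv_mul_rnDeriv hVW (κ := ν)),
            hVν.ae_le (Measure.rnDeriv_mul_rnDeriv hVQ (κ := ν)),
            hVW.ae_le (Measure.rnDeriv_pos hW), hVν.ae_le (Measure.rnDeriv_lt_top W ν),
            hVQ.ae_le (Measure.rnDeriv_pos hQ), hVν.ae_le (Measure.rnDeriv_lt_top Q ν),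
            Measure.rnDeriv_pos hVν, hVν.ae_le (Measure.rnDeriv_lt_top V ν),
            hVW.ae_le (Measure.rnDeriv_lt_top V W), hVQ.ae_le (Measure.rnDeriv_lt_top V Q)]
            with y h1 h2 h3 h4 h5 h6 h7 h8 h9 h10
          have hfpos : 0 < f y := ENNReal.toReal_pos h3.ne' h4.ne
          have hgpos : 0 < g y := ENNReal.toReal_pos h5.ne' h6.ne
          have hvpos : 0 < (V.rnDeriv ν y).toReal := ENNReal.toReal_pos h7.ne' h8.ne
          have h1' : (V.rnDeriv W y).toReal * f y = (V.rnDeriv ν y).toReal := by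
            have := congrArg ENNReal.toReal h1
            rwa [Pi.mul_apply, ENNReal.toReal_mul] at this
          have h2' : (V.rnDeriv Q y).toReal * g y = (V.rnDeriv ν y).toReal := by
            have := congrArg ENNReal.toReal h2
            rwa [Pi.mul_apply, ENNReal.toReal_mul] at this
          have hu : (V.rnDeriv W y).toReal = (V.rnDeriv ν y).toReal / f y :=
            (eq_div_iff hfpos.ne').mpr h1'
          have hw : (V.rnDeriv Q y).toReal = (V.rnDeriv ν y).toReal / g y :=
            (eq_div_iff hgpos.ne').mpr h2'
          have hrpos : 0 < r y :=
            mul_pos (Real.rpow_pos_of_pos hfpos _) (Real.rpow_pos_of_pos hgpos _)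
          have hlogr : Real.log (r y) = ρ * Real.log (f y) + (1 - ρ) * Real.log (g y) := by
            rw [hrdef]
            simp only
            rw [Real.log_mul (Real.rpow_pos_of_pos hfpos _).ne' (Real.rpow_pos_of_pos hgpos _).ne',
              Real.log_rpow hfpos, Real.log_rpow hgpos]
          rw [hhdef]
          simp only
          rw [Real.log_div hrpos.ne' hvpos.ne', hlogr, hu, hw,
            Real.log_div hvpos.ne' hfpos.ne', Real.log_div hvpos.ne' hgpos.ne']
          ring
        have hET : ∫⁻ y, ENNReal.ofReal (h y) ∂V ≤ ENNReal.ofReal Z := by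
          rw [← MeasureTheory.lintegral_rnDeriv_mul hVν
            hhmeas.ennreal_ofReal.aemeasurable]
          have hb : ∀ᵐ y ∂ν, V.rnDeriv ν y * ENNReal.ofReal (h y) ≤ ENNReal.ofReal (r y) := by
            filter_upwards [Measure.rnDeriv_lt_top V ν] with y hy
            rcases eq_or_ne (V.rnDeriv ν y) 0 with h0 | h0
            · simp [h0]
            · have hvpos : 0 < (V.rnDeriv ν y).toReal := ENNReal.toReal_pos h0 hy.ne
              rw [(ENNReal.ofReal_toReal hy.ne).symm, ← ENNReal.ofReal_mul ENNReal.toReal_nonneg]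
              apply ENNReal.ofReal_le_ofReal
              rw [hhdef]
              simp only
              rw [mul_div_cancel₀ _ hvpos.ne']
          calc ∫⁻ y, V.rnDeriv ν y * ENNReal.ofReal (h y) ∂ν
              ≤ ∫⁻ y, ENNReal.ofReal (r y) ∂ν := lintegral_mono_ae hb
            _ = ENNReal.ofReal Z :=
              (ofReal_integral_eq_lintegral_ofReal hrint (ae_of_all _ hrnn)).symm
        have hhint : Integrable h V := by
          have h2 := integrable_toReal_of_lintegral_ne_top
            hhmeas.ennreal_ofReal.aemeasurable
            (hET.trans_lt ENNReal.ofReal_lt_top).ne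
          refine h2.congr (ae_of_all _ fun y => ?_)
          simp only [Function.comp_apply]
          rw [ENNReal.toReal_ofReal (hhnn y)]
        have hle : ∫ y, h y ∂V ≤ Z := by
          have h1 : ENNReal.ofReal (∫ y, h y ∂V) = ∫⁻ y, ENNReal.ofReal (h y) ∂V :=
            ofReal_integral_eq_lintegral_ofReal hhint (ae_of_all _ hhnn)
          exact (ENNReal.ofReal_le_ofReal_iff hZnn).mp (h1 ▸ hET)
        have hhpos : ∀ᵐ y ∂V, 0 < h y := by
          filter_upwards [hVW.ae_le (Measure.rnDeriv_pos hW),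
            hVν.ae_le (Measure.rnDeriv_lt_top W ν),
            hVQ.ae_le (Measure.rnDeriv_pos hQ), hVν.ae_le (Measure.rnDeriv_lt_top Q ν),
            Measure.rnDeriv_pos hVν, hVν.ae_le (Measure.rnDeriv_lt_top V ν)]
            with y h3 h4 h5 h6 h7 h8
          have hfpos : 0 < f y := ENNReal.toReal_pos h3.ne' h4.ne
          have hgpos : 0 < g y := ENNReal.toReal_pos h5.ne' h6.ne
          have hvpos : 0 < (V.rnDeriv ν y).toReal := ENNReal.toReal_pos h7.ne' h8.ne
          exact div_pos
            (mul_pos (Real.rpow_pos_of_pos hfpos _) (Real.rpow_pos_of_pos hgpos _)) hvpos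
        have hlogint : Integrable (fun y => Real.log (h y)) V := by
          refine (((hiW.const_mul ρ).add (hiQ.const_mul (1 - ρ))).neg).congr ?_
          exact aeA.mono fun y hy => hy.symm
        have hjen := my_jensen_log V hhpos hhint hlogint
        have hpos' := my_integral_pos V hhpos hhint
        have hEq : ∫ y, Real.log (h y) ∂V = -(ρ * klDiv' V W + (1 - ρ) * klDiv' V Q) := by
          rw [integral_congr_ae aeA, integral_neg,
            integral_add (hiW.const_mul ρ) (hiQ.const_mul (1 - ρ)),
            integral_const_mul, integral_const_mul]
          rfl
        have hlogZ : Real.log (∫ y, h y ∂V) ≤ Real.log Z := Real.log_le_log hpos' hle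
        have main : -Real.log Z ≤ ρ * klDiv' V W + (1 - ρ) * klDiv' V Q := by
          rw [hEq] at hjen
          linarith
        calc ENNReal.ofReal (-Real.log Z)
            ≤ ENNReal.ofReal (ρ * klDiv' V W + (1 - ρ) * klDiv' V Q) :=
              ENNReal.ofReal_le_ofReal main
          _ ≤ ENNReal.ofReal (ρ * klDiv' V W) + ENNReal.ofReal ((1 - ρ) * klDiv' V Q) :=
              ENNReal.ofReal_add_le
          _ = ENNReal.ofReal ρ * ENNReal.ofReal (klDiv' V W)
              + ENNReal.ofReal (1 - ρ) * ENNReal.ofReal (klDiv' V Q) := by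
              rw [ENNReal.ofReal_mul hρ0.le, ENNReal.ofReal_mul h1ρ.le]
      · -- upper bound
        have hexp : Real.exp ((1 - ρ) * renyiDiv ρ W Q ν) = Z⁻¹ := by
          rw [hrd]
          have hne : ρ - 1 ≠ 0 := by linarith
          have heq : (1 - ρ) * ((ρ - 1)⁻¹ * Real.log Z) = -Real.log Z := by
            field_simp
            ring
          rw [heq, Real.exp_neg, Real.exp_log hZ]
        set t : Y → ℝ := fun y => Z⁻¹ * r y with htdef
        have htmeas : Measurable t := measurable_const.mul hrmeas
        have htnn : ∀ y, 0 ≤ t y := fun y => mul_nonneg (inv_nonneg.mpr hZnn) (hrnn y)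
        have htint : Integrable t ν := hrint.const_mul _
        have hitZ : ∫ y, t y ∂ν = 1 := by
          rw [htdef]
          simp only
          rw [integral_const_mul, ← hZdef, inv_mul_cancel₀ hZ.ne']
        set μs : Measure Y := ν.withDensity (fun y => ENNReal.ofReal (t y)) with hμdef
        have hdmeas : Measurable (fun y => ENNReal.ofReal (t y)) := htmeas.ennreal_ofReal
        haveI hPμ : IsProbabilityMeasure μs := by
          constructor
          rw [hμdef, withDensity_apply _ MeasurableSet.univ, Measure.restrict_univ,
            ← ofReal_integral_eq_lintegral_ofReal htint (ae_of_all _ htnn), hitZ,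
            ENNReal.ofReal_one]
        have hμν : μs ≪ ν := withDensity_absolutelyContinuous _ _
        have hrnD : μs.rnDeriv ν =ᵐ[ν] fun y => ENNReal.ofReal (t y) :=
          Measure.rnDeriv_withDensity ν hdmeas
        have hμW : μs ≪ W := by
          refine Measure.AbsolutelyContinuous.mk fun A hA hA0 => ?_
          have h0 : W.rnDeriv ν =ᵐ[ν.restrict A] 0 := by
            rw [← lintegral_eq_zero_iff (Measure.measurable_rnDeriv W ν),
              Measure.setLIntegral_rnDeriv hW]
            exact hA0
          rw [hμdef, withDensity_apply _ hA, lintegral_eq_zero_iff hdmeas]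
          filter_upwards [h0] with y hy
          have hfy : f y = 0 := by rw [hfdef]; simp [hy]
          simp [htdef, hrdef, hfy, Real.zero_rpow hρ0.ne']
        have hμQ : μs ≪ Q := by
          refine Measure.AbsolutelyContinuous.mk fun A hA hA0 => ?_
          have h0 : Q.rnDeriv ν =ᵐ[ν.restrict A] 0 := by
            rw [← lintegral_eq_zero_iff (Measure.measurable_rnDeriv Q ν),
              Measure.setLIntegral_rnDeriv hQ]
            exact hA0
          rw [hμdef, withDensity_apply _ hA, lintegral_eq_zero_iff hdmeas]
          filter_upwards [h0] with y hy
          have hgy : g y = 0 := by rw [hgdef]; simp [hy]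
          simp [htdef, hrdef, hgy, Real.zero_rpow h1ρ.ne']
        have htpos : ∀ᵐ y ∂μs, 0 < t y := by
          filter_upwards [Measure.rnDeriv_pos hμν, hμν.ae_le hrnD] with y h1 h2
          rw [h2] at h1
          exact ENNReal.ofReal_pos.mp h1
        have hfgpos : ∀ᵐ y ∂μs, 0 < f y ∧ 0 < g y := by
          refine htpos.mono fun y hy => ?_
          have hrpos : 0 < r y := by
            by_contra hc
            have hr0 : r y = 0 := le_antisymm (not_lt.mp hc) (hrnn y)
            rw [htdef] at hy
            simp only at hy
            rw [hr0, mul_zero] at hy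
            exact lt_irrefl 0 hy
          constructor
          · by_contra hc
            have hfy : f y = 0 := le_antisymm (not_lt.mp hc) ENNReal.toReal_nonneg
            rw [hrdef] at hrpos
            simp only at hrpos
            rw [hfy, Real.zero_rpow hρ0.ne', zero_mul] at hrpos
            exact lt_irrefl 0 hrpos
          · by_contra hc
            have hgy : g y = 0 := le_antisymm (not_lt.mp hc) ENNReal.toReal_nonneg
            rw [hrdef] at hrpos
            simp only at hrpos
            rw [hgy, Real.zero_rpow h1ρ.ne', mul_zero] at hrpos
            exact lt_irrefl 0 hrpos
        set L : Y → ℝ := fun y => Real.log (g y) - Real.log (f y) with hLdef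
        have hLmeas : Measurable L :=
          (Real.measurable_log.comp hgmeas).sub (Real.measurable_log.comp hfmeas)
        have hLint : Integrable L μs := by
          rw [hμdef, integrable_withDensity_iff_integrable_smul' hdmeas
            (ae_of_all _ fun y => ENNReal.ofReal_lt_top)]
          have hmaj2 : Integrable (fun y => Z⁻¹ * (ρ⁻¹ * g y + (1 - ρ)⁻¹ * f y)) ν :=
            ((hgint.const_mul _).add (hfint.const_mul _)).const_mul _
          refine hmaj2.mono' ?_ (ae_of_all _ fun y => ?_)
          · exact (hdmeas.ennreal_toReal.smul hLmeas).aestronglyMeasurable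
          · rw [smul_eq_mul, ENNReal.toReal_ofReal (htnn y), Real.norm_eq_abs, abs_mul,
              abs_of_nonneg (htnn y)]
            have hb := my_bound hρ0 hρ1 (x := f y) (y := g y) ENNReal.toReal_nonneg
              ENNReal.toReal_nonneg
            calc t y * |L y| = Z⁻¹ * (f y ^ ρ * g y ^ (1 - ρ) * |Real.log (g y) - Real.log (f y)|) := by
                  rw [htdef, hLdef, hrdef]; simp only; ring
              _ ≤ Z⁻¹ * (ρ⁻¹ * g y + (1 - ρ)⁻¹ * f y) :=
                  mul_le_mul_of_nonneg_left hb (inv_nonneg.mpr hZnn)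
        have haeW : (fun y => Real.log ((μs.rnDeriv W y).toReal)) =ᵐ[μs]
            fun y => -Real.log Z + (1 - ρ) * L y := by
          filter_upwards [hμν.ae_le (Measure.rnDeriv_mul_rnDeriv hμW (κ := ν)),
            hμν.ae_le hrnD, htpos, hfgpos] with y h1 h2 h3 h4
          obtain ⟨hfpos, hgpos⟩ := h4
          have h1' : (μs.rnDeriv W y).toReal * f y = t y := by
            have hc := congrArg ENNReal.toReal h1
            rw [Pi.mul_apply, ENNReal.toReal_mul, h2, ENNReal.toReal_ofReal (htnn y)] at hc
            exact hc
          have hu : (μs.rnDeriv W y).toReal = t y / f y := (eq_div_iff hfpos.ne').mpr h1'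
          have hrpos : 0 < r y := by
            rw [hrdef]
            exact mul_pos (Real.rpow_pos_of_pos hfpos _) (Real.rpow_pos_of_pos hgpos _)
          have hlogt : Real.log (t y)
              = -Real.log Z + (ρ * Real.log (f y) + (1 - ρ) * Real.log (g y)) := by
            rw [htdef]
            simp only
            rw [Real.log_mul (inv_ne_zero hZ.ne') hrpos.ne', Real.log_inv, hrdef]
            simp only
            rw [Real.log_mul (Real.rpow_pos_of_pos hfpos _).ne' (Real.rpow_pos_of_pos hgpos _).ne',
              Real.log_rpow hfpos, Real.log_rpow hgpos]
          rw [hu, Real.log_div h3.ne' hfpos.ne', hlogt, hLdef]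
          simp only
          ring
        have haeQ : (fun y => Real.log ((μs.rnDeriv Q y).toReal)) =ᵐ[μs]
            fun y => -Real.log Z + (-ρ) * L y := by
          filter_upwards [hμν.ae_le (Measure.rnDeriv_mul_rnDeriv hμQ (κ := ν)),
            hμν.ae_le hrnD, htpos, hfgpos] with y h1 h2 h3 h4
          obtain ⟨hfpos, hgpos⟩ := h4
          have h1' : (μs.rnDeriv Q y).toReal * g y = t y := by
            have hc := congrArg ENNReal.toReal h1
            rw [Pi.mul_apply, ENNReal.toReal_mul, h2, ENNReal.toReal_ofReal (htnn y)] at hc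
            exact hc
          have hu : (μs.rnDeriv Q y).toReal = t y / g y := (eq_div_iff hgpos.ne').mpr h1'
          have hrpos : 0 < r y := by
            rw [hrdef]
            exact mul_pos (Real.rpow_pos_of_pos hfpos _) (Real.rpow_pos_of_pos hgpos _)
          have hlogt : Real.log (t y)
              = -Real.log Z + (ρ * Real.log (f y) + (1 - ρ) * Real.log (g y)) := by
            rw [htdef]
            simp only
            rw [Real.log_mul (inv_ne_zero hZ.ne') hrpos.ne', Real.log_inv, hrdef]
            simp only
            rw [Real.log_mul (Real.rpow_pos_of_pos hfpos _).ne' (Real.rpow_pos_of_pos hgpos _).ne',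
              Real.log_rpow hfpos, Real.log_rpow hgpos]
          rw [hu, Real.log_div h3.ne' hgpos.ne', hlogt, hLdef]
          simp only
          ring
        have hiWs : Integrable (fun y => Real.log ((μs.rnDeriv W y).toReal)) μs :=
          ((integrable_const (-Real.log Z)).add (hLint.const_mul (1 - ρ))).congr haeW.symm
        have hiQs : Integrable (fun y => Real.log ((μs.rnDeriv Q y).toReal)) μs :=
          ((integrable_const (-Real.log Z)).add (hLint.const_mul (-ρ))).congr haeQ.symm
        have hkW : klDiv' μs W = -Real.log Z + (1 - ρ) * ∫ y, L y ∂μs := by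
          unfold klDiv'
          rw [integral_congr_ae haeW, integral_add (integrable_const _) (hLint.const_mul _),
            integral_const, integral_const_mul]
          simp [measure_univ]
        have hkQ : klDiv' μs Q = -Real.log Z + (-ρ) * ∫ y, L y ∂μs := by
          unfold klDiv'
          rw [integral_congr_ae haeQ, integral_add (integrable_const _) (hLint.const_mul _),
            integral_const, integral_const_mul]
          simp [measure_univ]
        have haW : 0 ≤ klDiv' μs W := my_klDiv'_nonneg μs W hμW hiWs
        have haQ : 0 ≤ klDiv' μs Q := my_klDiv'_nonneg μs Q hμQ hiQs
        refine iInf_le_of_le μs (iInf_le_of_le hPμ ?_)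
        unfold klDivE
        rw [if_pos ⟨hμW, hiWs⟩, if_pos ⟨hμQ, hiQs⟩,
          ← ENNReal.ofReal_mul hρ0.le, ← ENNReal.ofReal_mul h1ρ.le,
          ← ENNReal.ofReal_add (mul_nonneg hρ0.le haW) (mul_nonneg h1ρ.le haQ)]
        apply le_of_eq
        congr 1
        rw [hkW, hkQ]
        ring
  · -- Z = 0 case
    have hZ0 : Z = 0 := le_antisymm (not_lt.mp hZ) hZnn
    rw [if_neg hZ, ENNReal.mul_top hone]
    refine (iInf_eq_top.mpr fun V => iInf_eq_top.mpr fun hV => ?_).symm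
    haveI := hV
    by_cases cW : V ≪ W ∧ Integrable (fun y => Real.log ((V.rnDeriv W y).toReal)) V
    swap
    · unfold klDivE
      rw [if_neg cW, ENNReal.mul_top hrhone, top_add]
    by_cases cQ : V ≪ Q ∧ Integrable (fun y => Real.log ((V.rnDeriv Q y).toReal)) V
    swap
    · unfold klDivE
      rw [if_neg cQ, ENNReal.mul_top hone, add_top]
    exfalso
    have hVν : V ≪ ν := cW.1.trans hW
    have hr0 : r =ᵐ[ν] 0 :=
      (integral_eq_zero_iff_of_nonneg_ae (ae_of_all _ hrnn) hrint).mp hZ0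
    have hv0 : V.rnDeriv ν =ᵐ[ν] 0 := by
      filter_upwards [hr0, Measure.rnDeriv_mul_rnDeriv cW.1 (κ := ν),
        Measure.rnDeriv_mul_rnDeriv cQ.1 (κ := ν),
        Measure.rnDeriv_lt_top W ν, Measure.rnDeriv_lt_top Q ν] with y h0 h1 h2 h3 h4
      simp only [Pi.zero_apply] at h0 ⊢
      have hfg : f y = 0 ∨ g y = 0 := by
        rcases mul_eq_zero.mp h0 with h | h
        · exact Or.inl ((Real.rpow_eq_zero ENNReal.toReal_nonneg hρ0.ne').mp h)
        · exact Or.inr ((Real.rpow_eq_zero ENNReal.toReal_nonneg h1ρ.ne').mp h)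
      rcases hfg with h | h
      · have hW0 : W.rnDeriv ν y = 0 := by
          rcases (ENNReal.toReal_eq_zero_iff _).mp h with h' | h'
          · exact h'
          · exact absurd h' h3.ne
        rw [← h1]
        simp [Pi.mul_apply, hW0]
      · have hQ0 : Q.rnDeriv ν y = 0 := by
          rcases (ENNReal.toReal_eq_zero_iff _).mp h with h' | h'
          · exact h'
          · exact absurd h' h4.ne
        rw [← h2]
        simp [Pi.mul_apply, hQ0]
    have hun : V Set.univ = 0 := by
      rw [← Measure.lintegral_rnDeriv hVν, lintegral_congr_ae hv0]
      simp
    simp [measure_univ] at hun
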